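/- Let E_1,…,E_K be n×n complex matrices satisfying the trace-preservation condition Σ_{k=1}^K E_kᴴ E_k = I, and let ψ ∈ ℂⁿ be a unit vector with ρ = ψψᴴ. If the output state σ = Σ_{k=1}^K E_k ρ E_kᴴ satisfies Tr[σ²] = 1, then there exist a unit vector φ ∈ ℂⁿ and complex numbers μ_1,…,μ_K with Σ_{k=1}^K |μ_k|² = 1 such that E_k ψ = μ_k φ for every k, and consequently σ = φφᴴ; equivalently, there exists an n×n unitary matrix U with σ = U ρ Uᴴ. Conversely, if σ = U ρ Uᴴ for some unitary U then Tr[σ²] = 1. Thus a completely positive trace-preserving map in Kraus form acts unitarily on a pure state if and only if it preserves that state's purity. -/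

import Mathlib

open Matrix BigOperators

section Stmt18Aux

variable {n : ℕ}

private lemma vmv_mul_vmv (a b c d : Fin n → ℂ) :
    vecMulVec a b * vecMulVec c d = (b ⬝ᵥ c) • vecMulVec a d := by
  ext i j
  simp [mul_apply, vecMulVec_apply, dotProduct, Finset.sum_mul, Finset.mul_sum]
  exact Finset.sum_congr rfl fun k _ => by ring

private lemma trace_vmv (a b : Fin n → ℂ) : trace (vecMulVec a b) = b ⬝ᵥ a := by
  simp [trace, diag, vecMulVec_apply, dotProduct, mul_comm]

private lemma conj_mul_vmv (E : Matrix (Fin n) (Fin n) ℂ) (ψ : Fin n → ℂ) :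
    E * vecMulVec ψ (star ψ) * Eᴴ = vecMulVec (E.mulVec ψ) (star (E.mulVec ψ)) := by
  ext i j
  simp [mul_apply, vecMulVec_apply, mulVec, dotProduct, conjTranspose_apply,
    Finset.sum_mul, Finset.mul_sum, map_sum]
  exact Finset.sum_congr rfl fun k _ => Finset.sum_congr rfl fun l _ => by ring

private lemma vmv_mulVec (a b x : Fin n → ℂ) :
    (vecMulVec a b).mulVec x = (b ⬝ᵥ x) • a := by
  ext i
  simp [mulVec, vecMulVec_apply, dotProduct, Finset.mul_sum, Finset.sum_mul]
  exact Finset.sum_congr rfl fun k _ => by ring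

private lemma smul_vmv (c : ℂ) (a : Fin n → ℂ) :
    vecMulVec (c • a) (star (c • a)) = (c * (starRingEnd ℂ) c) • vecMulVec a (star a) := by
  ext i j
  simp [vecMulVec_apply]
  ring

private lemma conj_dot (a b : Fin n → ℂ) : (starRingEnd ℂ) (star a ⬝ᵥ b) = star b ⬝ᵥ a := by
  simp [dotProduct, map_sum, mul_comm]

private def toE (v : Fin n → ℂ) : EuclideanSpace ℂ (Fin n) := WithLp.toLp 2 v

private lemma inner_toE (a b : Fin n → ℂ) : @inner ℂ _ _ (toE a) (toE b) = star a ⬝ᵥ b := by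
  simp [toE, PiLp.inner_apply, dotProduct, mul_comm]

private lemma dot_self_eq (a : Fin n → ℂ) : star a ⬝ᵥ a = (‖toE a‖ : ℂ) ^ 2 := by
  rw [← inner_toE, inner_self_eq_norm_sq_to_K]
  norm_num

private lemma dot_self_real (a : Fin n → ℂ) :
    ∃ x : ℝ, 0 ≤ x ∧ star a ⬝ᵥ a = (x : ℂ) ∧ (x = 0 ↔ a = 0) := by
  refine ⟨∑ i, Complex.normSq (a i), Finset.sum_nonneg fun i _ => Complex.normSq_nonneg _, ?_, ?_⟩
  · simp [dotProduct, Complex.normSq_eq_conj_mul_self]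
  · rw [Finset.sum_eq_zero_iff_of_nonneg fun i _ => Complex.normSq_nonneg _]
    constructor
    · intro h; funext i; exact Complex.normSq_eq_zero.mp (h i (Finset.mem_univ i))
    · intro h i _; simp [h]

private lemma exists_unitary (ψ φ : Fin n → ℂ) (hψ : star ψ ⬝ᵥ ψ = 1) (hφ : star φ ⬝ᵥ φ = 1) :
    ∃ U ∈ Matrix.unitaryGroup (Fin n) ℂ,
      U * vecMulVec ψ (star ψ) * Uᴴ = vecMulVec φ (star φ) := by
  set t : ℂ := star φ ⬝ᵥ ψ with ht
  set α : ℂ := if t = 0 then 1 else t / ‖t‖ with hα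
  set r : ℝ := if t = 0 then 0 else ‖t‖ with hrdef
  have hαconj_t : (starRingEnd ℂ) α * t = (r : ℂ) := by
    by_cases h : t = 0
    · simp [hα, hrdef, h]
    · have hnt : (‖t‖ : ℂ) ≠ 0 := by simpa using norm_ne_zero_iff.mpr h
      rw [hα, hrdef, if_neg h, if_neg h]
      rw [map_div₀, Complex.conj_ofReal]
      field_simp
      have habs : ((‖t‖ : ℝ) : ℂ) ≠ 0 := hnt
      rw [Complex.conj_mul']
  have hαunit : α * (starRingEnd ℂ) α = 1 := by
    by_cases h : t = 0
    · simp [hα, h]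
    · have hnt : (‖t‖ : ℂ) ≠ 0 := by simpa using norm_ne_zero_iff.mpr h
      rw [hα, if_neg h, map_div₀, Complex.conj_ofReal]
      field_simp
      have habs : ((‖t‖ : ℝ) : ℂ) ≠ 0 := hnt
      rw [mul_comm, Complex.conj_mul']
  set w : Fin n → ℂ := ψ - α • φ with hw
  by_cases hw0 : w = 0
  · have hψφ : ψ = α • φ := by rwa [hw, sub_eq_zero] at hw0
    refine ⟨1, ?_, ?_⟩
    · exact Submonoid.one_mem _
    · rw [Matrix.one_mul, conjTranspose_one, Matrix.mul_one, hψφ, smul_vmv, hαunit, one_smul]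
  · obtain ⟨sr, hsr0, hs, hs0iff⟩ := dot_self_real w
    have hsrne : sr ≠ 0 := fun h => hw0 (hs0iff.mp h)
    have hsrC : ((sr:ℂ)) ≠ 0 := by exact_mod_cast hsrne
    have hψφconj : star ψ ⬝ᵥ φ = (starRingEnd ℂ) t := by rw [ht, conj_dot]
    have hαt' : α * (starRingEnd ℂ) t = (r : ℂ) := by
      have := congrArg (starRingEnd ℂ) hαconj_t
      simpa [mul_comm, Complex.conj_ofReal] using this
    have hwψ : star w ⬝ᵥ ψ = 1 - (r:ℂ) := by
      rw [hw, star_sub, star_smul, sub_dotProduct, smul_dotProduct, hψ, smul_eq_mul, ← ht,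
        show (star α : ℂ) = (starRingEnd ℂ) α from rfl, hαconj_t]
    have hwφ : star w ⬝ᵥ φ = (starRingEnd ℂ) t - (starRingEnd ℂ) α := by
      rw [hw, star_sub, star_smul, sub_dotProduct, smul_dotProduct, hψφconj, hφ, smul_eq_mul,
        mul_one, show (star α : ℂ) = (starRingEnd ℂ) α from rfl]
    have hww : (sr : ℂ) = 2 - 2 * (r:ℂ) := by
      rw [← hs]
      nth_rewrite 2 [hw]
      rw [dotProduct_sub, dotProduct_smul, hwψ, hwφ, smul_eq_mul]
      have h5 : α * ((starRingEnd ℂ) t - (starRingEnd ℂ) α) = (r:ℂ) - 1 := by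
        rw [mul_sub, hαt', hαunit]
      rw [h5]
      ring
    set M : Matrix (Fin n) (Fin n) ℂ := vecMulVec w (star w) with hM
    set c : ℂ := 2 / (sr:ℂ) with hc
    set P : Matrix (Fin n) (Fin n) ℂ := c • M with hP
    have hMH : Mᴴ = M := by
      ext i j; simp [hM, conjTranspose_apply, vecMulVec_apply, mul_comm]
    have hcconj : (starRingEnd ℂ) c = c := by
      rw [hc, map_div₀, Complex.conj_ofReal, show ((2:ℂ)) = ((2:ℝ):ℂ) by norm_num,
        Complex.conj_ofReal]
    have hMM : M * M = (sr:ℂ) • M := by rw [hM, vmv_mul_vmv, hs]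
    set U : Matrix (Fin n) (Fin n) ℂ := 1 - P with hU
    have hUH : Uᴴ = U := by
      rw [hU, conjTranspose_sub, conjTranspose_one, hP, conjTranspose_smul, hMH]
      congr 1
      rw [RCLike.star_def, hcconj]
    have hPP : P * P = P + P := by
      have hcc : (c * c) * (sr:ℂ) = c + c := by
        rw [hc]; field_simp; ring
      rw [hP, Matrix.smul_mul, Matrix.mul_smul, hMM, smul_smul, smul_smul, hcc, add_smul]
    have hUU : U * U = 1 := by
      rw [hU, Matrix.sub_mul, Matrix.mul_sub, Matrix.mul_sub, Matrix.one_mul, Matrix.mul_one,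
        hPP]
      simp only [← hP, Matrix.one_mul]
      abel
    have hPψ : P *ᵥ ψ = w := by
      have h1 : c * (1 - (r:ℂ)) = 1 := by
        have hne : (2 - 2*(r:ℂ)) ≠ 0 := by rw [← hww]; exact hsrC
        have hne' : (1 - (r:ℂ)) ≠ 0 := fun h => hne (by linear_combination 2 * h)
        rw [hc, hww]
        field_simp
        try ring
      rw [hP, Matrix.smul_mulVec, hM, vmv_mulVec, hwψ, smul_smul, h1, one_smul]
    have hUψ : U *ᵥ ψ = α • φ := by
      rw [hU, Matrix.sub_mulVec, Matrix.one_mulVec, hPψ, hw]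
      ext i; simp
    refine ⟨U, ?_, ?_⟩
    · rw [Matrix.mem_unitaryGroup_iff, star_eq_conjTranspose, hUH]
      exact hUU
    · rw [conj_mul_vmv, hUψ, smul_vmv, hαunit, one_smul]

private lemma purity_of_unitary (ψ : Fin n → ℂ) (hψ : star ψ ⬝ᵥ ψ = 1)
    (U : Matrix (Fin n) (Fin n) ℂ) (hU : U ∈ Matrix.unitaryGroup (Fin n) ℂ) :
    trace ((U * vecMulVec ψ (star ψ) * Uᴴ) * (U * vecMulVec ψ (star ψ) * Uᴴ)) = 1 := by
  have h1 : Uᴴ * U = 1 := by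
    rw [← star_eq_conjTranspose]; exact Matrix.mem_unitaryGroup_iff'.mp hU
  set ρ := vecMulVec ψ (star ψ) with hρ
  have h2 : (U * ρ * Uᴴ) * (U * ρ * Uᴴ) = U * (ρ * ρ) * Uᴴ := by
    calc (U * ρ * Uᴴ) * (U * ρ * Uᴴ) = U * (ρ * ((Uᴴ * U) * (ρ * Uᴴ))) := by
          simp only [Matrix.mul_assoc]
      _ = U * (ρ * ρ) * Uᴴ := by rw [h1, Matrix.one_mul]; simp only [Matrix.mul_assoc]
  rw [h2, trace_mul_cycle, ← Matrix.mul_assoc, h1, Matrix.one_mul]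
  rw [hρ, vmv_mul_vmv, hψ, one_smul, trace_vmv, hψ]

end Stmt18Aux

/-- A CPTP map in Kraus form acts unitarily on a pure state iff it preserves that state's
purity: if `Σ_k E_kᴴ E_k = I`, `ψ` is a unit vector, `ρ = ψψᴴ` and `σ = Σ_k E_k ρ E_kᴴ`
has `Tr[σ²] = 1`, then there are a unit vector `φ` and scalars `μ_k` with `Σ_k |μ_k|² = 1`,
`E_k ψ = μ_k φ` and `σ = φφᴴ`; equivalently `σ = U ρ Uᴴ` for some unitary `U`.
Conversely, `σ = U ρ Uᴴ` with `U` unitary implies `Tr[σ²] = 1`. -/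
theorem stmt18 {n K : ℕ} (E : Fin K → Matrix (Fin n) (Fin n) ℂ)
    (hTP : ∑ k, (E k)ᴴ * E k = 1)
    (ψ : Fin n → ℂ) (hψ : star ψ ⬝ᵥ ψ = 1)
    (ρ σ : Matrix (Fin n) (Fin n) ℂ)
    (hρ : ρ = vecMulVec ψ (star ψ))
    (hσ : σ = ∑ k, E k * ρ * (E k)ᴴ) :
    (Matrix.trace (σ * σ) = 1 →
      (∃ (φ : Fin n → ℂ) (μ : Fin K → ℂ),
          star φ ⬝ᵥ φ = 1 ∧ (∑ k, Complex.normSq (μ k)) = 1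
          ∧ (∀ k, (E k).mulVec ψ = μ k • φ)
          ∧ σ = vecMulVec φ (star φ))
      ∧ ∃ U ∈ Matrix.unitaryGroup (Fin n) ℂ, σ = U * ρ * Uᴴ)
    ∧ ((∃ U ∈ Matrix.unitaryGroup (Fin n) ℂ, σ = U * ρ * Uᴴ) →
        Matrix.trace (σ * σ) = 1) := by
  set v : Fin K → (Fin n → ℂ) := fun k => (E k).mulVec ψ with hv
  have hσ' : σ = ∑ k, vecMulVec (v k) (star (v k)) := by
    rw [hσ]; exact Finset.sum_congr rfl fun k _ => by rw [hρ, conj_mul_vmv]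
  have hsum1 : ∑ k, star (v k) ⬝ᵥ v k = 1 := by
    have key : ∀ k, star (v k) ⬝ᵥ v k = star ψ ⬝ᵥ (((E k)ᴴ * E k) *ᵥ ψ) := by
      intro k
      rw [hv]
      simp only [star_mulVec, ← mulVec_mulVec]
      rw [dotProduct_mulVec, vecMul_vecMul, ← dotProduct_mulVec, mulVec_mulVec]
    simp only [key]
    have : ∑ x, star ψ ⬝ᵥ (((E x)ᴴ * E x) *ᵥ ψ) = star ψ ⬝ᵥ ((∑ x, (E x)ᴴ * E x) *ᵥ ψ) := by
      simp only [dotProduct, mulVec, Matrix.sum_apply, Finset.sum_mul, Finset.mul_sum]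
      rw [Finset.sum_comm]
      exact Finset.sum_congr rfl fun i _ => Finset.sum_comm
    rw [this, hTP, one_mulVec, hψ]
  have htr : trace (σ * σ) = ∑ k, ∑ l, (star (v k) ⬝ᵥ v l) * (star (v l) ⬝ᵥ v k) := by
    rw [hσ', Finset.sum_mul_sum, trace_sum]
    refine Finset.sum_congr rfl fun k _ => ?_
    rw [trace_sum]
    refine Finset.sum_congr rfl fun l _ => ?_
    rw [vmv_mul_vmv, trace_smul, trace_vmv, smul_eq_mul]
  constructor
  · intro htrace
    have htrR : ∑ k, ∑ l, Complex.normSq (star (v k) ⬝ᵥ v l) = 1 := by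
      have hC : ∑ k, ∑ l, ((Complex.normSq (star (v k) ⬝ᵥ v l) : ℝ) : ℂ) = 1 := by
        rw [← htrace, htr]
        refine Finset.sum_congr rfl fun k _ => Finset.sum_congr rfl fun l _ => ?_
        rw [show star (v l) ⬝ᵥ v k = (starRingEnd ℂ) (star (v k) ⬝ᵥ v l) from (conj_dot _ _).symm,
          Complex.mul_conj]
      exact_mod_cast hC
    have hNr : ∑ k, ‖toE (v k)‖^2 = 1 := by
      have hC : ∑ k, ((‖toE (v k)‖ : ℝ) : ℂ)^2 = 1 := by
        rw [← hsum1]; exact Finset.sum_congr rfl fun k _ => (dot_self_eq _).symm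
      exact_mod_cast hC
    have hCS : ∀ k l, Complex.normSq (star (v k) ⬝ᵥ v l) ≤ (‖toE (v k)‖ * ‖toE (v l)‖)^2 := by
      intro k l
      have h1 : Complex.normSq (star (v k) ⬝ᵥ v l) = ‖star (v k) ⬝ᵥ v l‖^2 := by
        rw [Complex.sq_norm]
      rw [h1, ← inner_toE]
      exact pow_le_pow_left₀ (norm_nonneg _)
        (norm_inner_le_norm (𝕜 := ℂ) (toE (v k)) (toE (v l))) 2
    have hzero : ∑ k, ∑ l,
        ((‖toE (v k)‖ * ‖toE (v l)‖)^2 - Complex.normSq (star (v k) ⬝ᵥ v l)) = 0 := by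
      simp only [Finset.sum_sub_distrib]
      rw [htrR]
      have hsq : ∑ k, ∑ l, (‖toE (v k)‖ * ‖toE (v l)‖)^2
          = (∑ k, ‖toE (v k)‖^2) * (∑ l, ‖toE (v l)‖^2) := by
        rw [Finset.sum_mul_sum]
        exact Finset.sum_congr rfl fun k _ => Finset.sum_congr rfl fun l _ => (mul_pow _ _ 2)
      rw [hsq, hNr]; ring
    have heq : ∀ k l,
        Complex.normSq (star (v k) ⬝ᵥ v l) = (‖toE (v k)‖ * ‖toE (v l)‖)^2 := by
      intro k l
      have h1 : ∀ kk ∈ Finset.univ, (0:ℝ) ≤ ∑ l,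
          ((‖toE (v kk)‖ * ‖toE (v l)‖)^2 - Complex.normSq (star (v kk) ⬝ᵥ v l)) :=
        fun kk _ => Finset.sum_nonneg fun l _ => sub_nonneg.2 (hCS kk l)
      have h2 := (Finset.sum_eq_zero_iff_of_nonneg h1).1 hzero k (Finset.mem_univ k)
      have h3 := (Finset.sum_eq_zero_iff_of_nonneg
        (fun l _ => sub_nonneg.2 (hCS k l))).1 h2 l (Finset.mem_univ l)
      linarith
    have hex : ∃ k0, v k0 ≠ 0 := by
      by_contra hcon; push_neg at hcon
      rw [Finset.sum_eq_zero (fun k _ => by rw [hcon k]; simp)] at hsum1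
      exact one_ne_zero hsum1.symm
    obtain ⟨k0, hk0⟩ := hex
    have hk0' : toE (v k0) ≠ 0 := by simpa [toE] using hk0
    have hnk0 : ‖toE (v k0)‖ ≠ 0 := norm_ne_zero_iff.2 hk0'
    set φ : Fin n → ℂ := ((‖toE (v k0)‖ : ℝ) : ℂ)⁻¹ • v k0 with hφdef
    have hφE : toE φ = ((‖toE (v k0)‖ : ℝ) : ℂ)⁻¹ • toE (v k0) := by
      rw [hφdef, toE, toE, WithLp.toLp_smul]
    have hφnorm : ‖toE φ‖ = 1 := by
      rw [hφE, norm_smul, norm_inv, Complex.norm_real, Real.norm_eq_abs,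
        abs_of_nonneg (norm_nonneg _), inv_mul_cancel₀ hnk0]
    have hφ1 : star φ ⬝ᵥ φ = 1 := by rw [dot_self_eq, hφnorm]; norm_num
    have hprop : ∀ k, ∃ c : ℂ, v k = c • φ := by
      intro k
      rcases eq_or_ne (v k) 0 with h | h
      · exact ⟨0, by rw [h, zero_smul]⟩
      · have hkE : toE (v k) ≠ 0 := by simpa [toE] using h
        have hinn : ‖(inner ℂ (toE (v k0)) (toE (v k)) : ℂ)‖ = ‖toE (v k0)‖ * ‖toE (v k)‖ := by
          have h2 := heq k0 k
          have h3 : Complex.normSq (star (v k0) ⬝ᵥ v k)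
              = ‖(inner ℂ (toE (v k0)) (toE (v k)) : ℂ)‖^2 := by
            rw [inner_toE, Complex.sq_norm]
          rw [h3] at h2
          have h4 : (0:ℝ) ≤ ‖toE (v k0)‖ * ‖toE (v k)‖ := by positivity
          exact (sq_eq_sq₀ (norm_nonneg _) h4).1 h2
        obtain ⟨cr, hcr0, hcr⟩ := (norm_inner_eq_norm_iff hk0' hkE).1 hinn
        refine ⟨cr * ((‖toE (v k0)‖ : ℝ) : ℂ), ?_⟩
        have h5 : v k = cr • v k0 := by simpa [toE] using congrArg WithLp.ofLp hcr
        rw [h5, hφdef, smul_smul, mul_assoc,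
          mul_inv_cancel₀ (by exact_mod_cast hnk0 : ((‖toE (v k0)‖:ℝ):ℂ) ≠ 0), mul_one]
    set μ : Fin K → ℂ := fun k => star φ ⬝ᵥ v k with hμdef
    have hvμ : ∀ k, v k = μ k • φ := by
      intro k
      obtain ⟨c, hc⟩ := hprop k
      have hck : μ k = c := by
        rw [hμdef]
        simp only [hc, dotProduct_smul, hφ1, smul_eq_mul, mul_one]
      rw [hck, ← hc]
    have hdotμ : ∀ k, star (v k) ⬝ᵥ v k = ((Complex.normSq (μ k) : ℝ) : ℂ) := by
      intro k
      rw [hvμ k, star_smul, smul_dotProduct, dotProduct_smul, hφ1, smul_eq_mul, smul_eq_mul,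
        mul_one, show (star (μ k) : ℂ) = (starRingEnd ℂ) (μ k) from rfl, mul_comm,
        Complex.mul_conj]
    have hμsumC : ∑ k, ((Complex.normSq (μ k) : ℝ) : ℂ) = 1 := by
      rw [← hsum1]; exact Finset.sum_congr rfl fun k _ => (hdotμ k).symm
    have hμsum : ∑ k, Complex.normSq (μ k) = 1 := by exact_mod_cast hμsumC
    have hσφ : σ = vecMulVec φ (star φ) := by
      rw [hσ']
      have hterm : ∀ k, vecMulVec (v k) (star (v k))
          = ((Complex.normSq (μ k) : ℝ) : ℂ) • vecMulVec φ (star φ) := by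
        intro k; rw [hvμ k, smul_vmv, Complex.mul_conj]
      simp only [hterm]
      rw [← Finset.sum_smul, hμsumC, one_smul]
    refine ⟨⟨φ, μ, hφ1, hμsum, fun k => hvμ k, hσφ⟩, ?_⟩
    obtain ⟨U, hU, hUeq⟩ := exists_unitary ψ φ hψ hφ1
    exact ⟨U, hU, by rw [hσφ, ← hUeq, hρ]⟩
  · rintro ⟨U, hU, hUσ⟩
    rw [hUσ, hρ]
    exact purity_of_unitary ψ hψ U hU
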